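/- Let α > 0, let k be a real number, and let ω : ℝ → ℂ be an integrable function. Then for every x ∈ ℝ: (1/(2π)) ∫_ℝ e^{−i x y} e^{−α y²/2} ( ∫_ℝ e^{i k y x'} ω(x') dx' ) dy = (1/√(2π α)) ∫_ℝ e^{−(x − k x')²/(2α)} ω(x') dx'. In particular, the one-mode covariant bosonic Gaussian channel acting on optical tomograms, defined via the characteristic-function transformation F(q,p) → F(kq,kp) e^{−α(q²+p²)/2}, is represented by the Gaussian integral kernel (1/√(2πα)) e^{−(x−kx')²/(2α)}. -/

import Mathlib

open Real MeasureTheory Complex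

/-- The one-mode covariant bosonic Gaussian channel
F(q,p) → F(kq,kp)·e^{−α(q²+p²)/2}, acting on an optical tomogram ω at a fixed
phase, is the integral operator with Gaussian kernel
(1/√(2πα))·e^{−(x−kx')²/(2α)}. -/
theorem covariant_channel_gaussian_kernel
    (α : ℝ) (hα : 0 < α) (k : ℝ) (ω : ℝ → ℂ) (hω : Integrable ω) (x : ℝ) :
    (1 / (2 * (Real.pi : ℂ))) *
      ∫ y : ℝ, Complex.exp (-Complex.I * (x : ℂ) * (y : ℂ))
        * Complex.exp (-(α : ℂ) * (y : ℂ) ^ 2 / 2)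
        * ∫ x' : ℝ, Complex.exp (Complex.I * (k : ℂ) * (y : ℂ) * (x' : ℂ)) * ω x'
    = (1 / (Real.sqrt (2 * Real.pi * α) : ℂ)) *
        ∫ x' : ℝ, Complex.exp (-((x : ℂ) - (k : ℂ) * (x' : ℂ)) ^ 2 / (2 * (α : ℂ)))
          * ω x' := by
  have hb : (0:ℂ).re < ((α:ℂ)/2).re := by
    simpa using by positivity
  -- the two-variable integrand
  set F : ℝ → ℝ → ℂ := fun y x' =>
    Complex.exp (-Complex.I * (x : ℂ) * (y : ℂ))
      * Complex.exp (-(α : ℂ) * (y : ℂ) ^ 2 / 2)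
      * (Complex.exp (Complex.I * (k : ℂ) * (y : ℂ) * (x' : ℂ)) * ω x') with hF
  have hInt : Integrable (Function.uncurry F) (volume.prod volume) := by
    have h1 : Integrable (fun y : ℝ => Real.exp (-(α/2) * y ^ 2)) :=
      integrable_exp_neg_mul_sq (by linarith)
    have h2 : Integrable (fun p : ℝ × ℝ =>
        Real.exp (-(α/2) * p.1 ^ 2) * ‖ω p.2‖) := h1.mul_prod hω.norm
    refine h2.mono' ?_ ?_
    · have hc : Continuous fun p : ℝ × ℝ =>
          Complex.exp (-Complex.I * (x : ℂ) * (p.1 : ℂ))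
            * Complex.exp (-(α : ℂ) * (p.1 : ℂ) ^ 2 / 2)
            * Complex.exp (Complex.I * (k : ℂ) * (p.1 : ℂ) * (p.2 : ℂ)) := by
        fun_prop
      have := hc.aestronglyMeasurable.mul (hω.1.comp_snd (μ := (volume : Measure ℝ)))
      apply this.congr
      filter_upwards with p
      simp only [Pi.mul_apply, Function.uncurry, hF]
      ring
    · filter_upwards with p
      simp only [Function.uncurry, hF, norm_mul]
      have e1 : ‖Complex.exp (-Complex.I * (x : ℂ) * (p.1 : ℂ))‖ = 1 := by
        rw [Complex.norm_exp]
        simp [mul_comm]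
      have e2 : ‖Complex.exp (Complex.I * (k : ℂ) * (p.1 : ℂ) * (p.2 : ℂ))‖ = 1 := by
        rw [Complex.norm_exp]
        simp [mul_assoc, mul_comm]
      have e3 : ‖Complex.exp (-(α : ℂ) * (p.1 : ℂ) ^ 2 / 2)‖
          = Real.exp (-(α/2) * p.1 ^ 2) := by
        rw [Complex.norm_exp]
        congr 1
        have : (-(α : ℂ) * (p.1 : ℂ) ^ 2 / 2) = ((-(α/2) * p.1 ^ 2 : ℝ) : ℂ) := by
          push_cast; ring
        rw [this, Complex.ofReal_re]
      rw [e1, e2, e3]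
      simp
  -- pull constants into the inner integral, then swap
  have step1 : (∫ y : ℝ, Complex.exp (-Complex.I * (x : ℂ) * (y : ℂ))
        * Complex.exp (-(α : ℂ) * (y : ℂ) ^ 2 / 2)
        * ∫ x' : ℝ, Complex.exp (Complex.I * (k : ℂ) * (y : ℂ) * (x' : ℂ)) * ω x')
      = ∫ y : ℝ, ∫ x' : ℝ, F y x' := by
    congr 1; funext y
    rw [hF, ← MeasureTheory.integral_const_mul]
  have step2 : (∫ y : ℝ, ∫ x' : ℝ, F y x') = ∫ x' : ℝ, ∫ y : ℝ, F y x' :=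
    integral_integral_swap hInt
  -- evaluate the inner Gaussian integral
  have step3 : ∀ x' : ℝ, (∫ y : ℝ, F y x')
      = ((Real.pi : ℂ) / ((α:ℂ)/2)) ^ (1/2 : ℂ)
        * Complex.exp (-((x : ℂ) - (k : ℂ) * (x' : ℂ)) ^ 2 / (2 * (α : ℂ))) * ω x' := by
    intro x'
    have key := fourierIntegral_gaussian hb ((k : ℂ) * (x' : ℂ) - (x : ℂ))
    have rearr : ∀ y : ℝ, F y x' =
        (Complex.exp (Complex.I * ((k : ℂ) * (x' : ℂ) - (x : ℂ)) * (y : ℂ))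
          * Complex.exp (-((α:ℂ)/2) * (y : ℂ) ^ 2)) * ω x' := by
      intro y
      have hmerge : Complex.exp (-Complex.I * (x:ℂ) * (y:ℂ))
            * Complex.exp (-(α:ℂ) * (y:ℂ)^2/2)
            * Complex.exp (Complex.I * (k:ℂ) * (y:ℂ) * (x':ℂ))
          = Complex.exp (Complex.I * ((k:ℂ) * (x':ℂ) - (x:ℂ)) * (y:ℂ))
            * Complex.exp (-((α:ℂ)/2) * (y:ℂ)^2) := by
        rw [← Complex.exp_add, ← Complex.exp_add, ← Complex.exp_add]
        congr 1; ring
      calc F y x' = Complex.exp (-Complex.I * (x:ℂ) * (y:ℂ))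
            * Complex.exp (-(α:ℂ) * (y:ℂ)^2/2)
            * Complex.exp (Complex.I * (k:ℂ) * (y:ℂ) * (x':ℂ)) * ω x' := by
            simp only [hF]; ring
        _ = _ := by rw [hmerge]
    calc (∫ y : ℝ, F y x')
        = (∫ y : ℝ, Complex.exp (Complex.I * ((k : ℂ) * (x' : ℂ) - (x : ℂ)) * (y : ℂ))
            * Complex.exp (-((α:ℂ)/2) * (y : ℂ) ^ 2)) * ω x' := by
          rw [← MeasureTheory.integral_mul_const]; exact integral_congr_ae (.of_forall rearr)
      _ = ((Real.pi : ℂ) / ((α:ℂ)/2)) ^ (1/2 : ℂ)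
            * Complex.exp (-((k : ℂ) * (x' : ℂ) - (x : ℂ)) ^ 2 / (4 * ((α:ℂ)/2))) * ω x' := by
          rw [key]
      _ = ((Real.pi : ℂ) / ((α:ℂ)/2)) ^ (1/2 : ℂ)
            * Complex.exp (-((x : ℂ) - (k : ℂ) * (x' : ℂ)) ^ 2 / (2 * (α : ℂ))) * ω x' := by
          ring_nf
  -- the constant
  have hc : (1 / (2 * (Real.pi : ℂ))) * ((Real.pi : ℂ) / ((α:ℂ)/2)) ^ (1/2 : ℂ)
      = 1 / (Real.sqrt (2 * Real.pi * α) : ℂ) := by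
    have h1 : ((Real.pi : ℂ) / ((α:ℂ)/2)) = ((2 * Real.pi / α : ℝ) : ℂ) := by
      push_cast; ring
    have h2 : ((Real.pi : ℂ) / ((α:ℂ)/2)) ^ (1/2 : ℂ)
        = ((Real.sqrt (2 * Real.pi / α) : ℝ) : ℂ) := by
      rw [h1, show ((1:ℂ)/2) = (((1/2 : ℝ) : ℂ)) by norm_num,
        ← Complex.ofReal_cpow (by positivity)]
      norm_cast
      rw [Real.sqrt_eq_rpow]
    rw [h2]
    have hπ : (0:ℝ) < Real.pi := Real.pi_pos
    have hr : (1 / (2 * Real.pi)) * Real.sqrt (2 * Real.pi / α)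
        = 1 / Real.sqrt (2 * Real.pi * α) := by
      have h2π : (0:ℝ) < 2 * Real.pi := by positivity
      have key : Real.sqrt (2 * Real.pi * α) * Real.sqrt (2 * Real.pi / α)
          = 2 * Real.pi := by
        rw [← Real.sqrt_mul (by positivity)]
        rw [show (2 * Real.pi * α) * (2 * Real.pi / α) = (2 * Real.pi)^2 by
          field_simp]
        exact Real.sqrt_sq h2π.le
      have hne : Real.sqrt (2 * Real.pi * α) ≠ 0 := by positivity
      have e2 : Real.sqrt 2 ^ 2 = 2 := Real.sq_sqrt (by norm_num)
      have eπ : Real.sqrt Real.pi ^ 2 = Real.pi := Real.sq_sqrt Real.pi_pos.le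
      field_simp
      linear_combination key
    calc (1 / (2 * (Real.pi : ℂ))) * ((Real.sqrt (2 * Real.pi / α) : ℝ) : ℂ)
        = (((1 / (2 * Real.pi)) * Real.sqrt (2 * Real.pi / α) : ℝ) : ℂ) := by push_cast; ring
      _ = ((1 / Real.sqrt (2 * Real.pi * α) : ℝ) : ℂ) := by rw [hr]
      _ = 1 / (Real.sqrt (2 * Real.pi * α) : ℂ) := by push_cast; ring
  rw [step1, step2]
  have key2 : (∫ x' : ℝ, ∫ y : ℝ, F y x')
      = ∫ x' : ℝ, ((Real.pi : ℂ) / ((α:ℂ)/2)) ^ (1/2 : ℂ)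
        * (Complex.exp (-((x : ℂ) - (k : ℂ) * (x' : ℂ)) ^ 2 / (2 * (α : ℂ))) * ω x') :=
    by
      refine integral_congr_ae (Filter.Eventually.of_forall fun x' => ?_)
      dsimp only
      rw [step3 x']; ring
  rw [key2, MeasureTheory.integral_const_mul, ← mul_assoc, hc]
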